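/- Let 𝕋³ = (ℝ/ℤ)³ be the flat three-dimensional torus with its Haar (Lebesgue) measure of total mass 1. Let K ≥ 0, R > 0, and let f : 𝕋³ × ℝ³ → [0,∞) be measurable with f ≤ K almost everywhere and such that for almost every x ∈ 𝕋³ the function v ↦ f(x,v) vanishes outside the closed ball B(0,R) ⊂ ℝ³. Then ∫_{𝕋³} (m₀f(x))² dx ≤ ((4/3)·π·K·R³)^{1/3} · ((4/3)·π·K + 1)^{5/3} · M₂f. -/

import Mathlib

open MeasureTheory Real
open scoped ENNReal RealInnerProductSpace

noncomputable section

/-- The flat 3-torus `(ℝ/ℤ)³` with its Haar (Lebesgue) probability measure. -/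
abbrev T3 : Type := Fin 3 → AddCircle (1 : ℝ)

/-- Euclidean 3-space with Lebesgue measure. -/
abbrev R3 : Type := EuclideanSpace ℝ (Fin 3)

instance : IsProbabilityMeasure (volume : Measure (AddCircle (1 : ℝ))) := ⟨by simp⟩

lemma vol_cb (r : ℝ) (hr : 0 ≤ r) :
    (volume (Metric.closedBall (0 : R3) r)).toReal = 4 / 3 * π * r ^ 3 := by
  rw [EuclideanSpace.volume_closedBall]
  have hcard : (Fintype.card (Fin 3)) = 3 := by simp
  rw [hcard]
  have hG : Real.Gamma (((3 : ℕ) : ℝ) / 2 + 1) = 3 / 4 * Real.sqrt π := by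
    have h1 : ((3 : ℕ) : ℝ) / 2 + 1 = 3 / 2 + 1 := by norm_num
    rw [h1, Real.Gamma_add_one (by norm_num), show (3 : ℝ) / 2 = 1 / 2 + 1 by norm_num,
      Real.Gamma_add_one (by norm_num), Real.Gamma_one_half_eq]
    ring
  have hs : Real.sqrt π ^ 3 / (3 / 4 * Real.sqrt π) = 4 / 3 * π := by
    have h2 : Real.sqrt π ^ 3 = π * Real.sqrt π := by
      rw [pow_succ, Real.sq_sqrt Real.pi_pos.le]
    rw [h2]
    have h3 : Real.sqrt π ≠ 0 := ne_of_gt (Real.sqrt_pos.2 Real.pi_pos)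
    field_simp
  rw [hG, hs, ENNReal.toReal_mul, ENNReal.toReal_pow, ENNReal.toReal_ofReal hr,
    ENNReal.toReal_ofReal (by positivity)]
  ring

lemma real_key (K' A Bv a b : ℝ) (hK' : 0 ≤ K') (hBv : Bv = K' + 1) (hA : 0 ≤ A)
    (ha : 0 ≤ a) (hb : 0 ≤ b) (haA : a ≤ A)
    (hsplit : ∀ r : ℝ, 0 < r → a ≤ K' * r ^ 3 + b / r ^ 2) :
    a ^ 2 ≤ A ^ ((1 : ℝ) / 3) * Bv ^ ((5 : ℝ) / 3) * b := by
  have hBpos : 0 < Bv := by linarith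
  rcases eq_or_lt_of_le ha with h0 | hapos
  · rw [← h0]
    have : (0:ℝ) ≤ A ^ ((1 : ℝ) / 3) * Bv ^ ((5 : ℝ) / 3) * b :=
      mul_nonneg (mul_nonneg (Real.rpow_nonneg hA _) (Real.rpow_nonneg hBpos.le _)) hb
    simpa using this
  · set t := a / Bv with ht
    have htpos : 0 < t := div_pos hapos hBpos
    set r := t ^ ((1 : ℝ) / 3) with hrdef
    have hrpos : 0 < r := Real.rpow_pos_of_pos htpos _
    have hr3 : r ^ 3 = t := by
      rw [hrdef, ← Real.rpow_natCast (t ^ ((1 : ℝ) / 3)) 3, ← Real.rpow_mul htpos.le]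
      norm_num
    have hr2 : r ^ 2 = t ^ ((2 : ℝ) / 3) := by
      rw [hrdef, ← Real.rpow_natCast (t ^ ((1 : ℝ) / 3)) 2, ← Real.rpow_mul htpos.le]
      norm_num
    have h := hsplit r hrpos
    rw [hr3, hr2] at h
    have hat : a = t * Bv := by rw [ht, div_mul_cancel₀ a hBpos.ne']
    have h2 : t ≤ b / t ^ ((2 : ℝ) / 3) := by
      have heq : K' * t + t = a := by rw [hat, hBv]; ring
      linarith
    have h3 : t * t ^ ((2 : ℝ) / 3) ≤ b :=
      (le_div_iff₀ (Real.rpow_pos_of_pos htpos _)).1 h2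
    have h4 : t ^ ((5 : ℝ) / 3) ≤ b := by
      have heq : t ^ ((5 : ℝ) / 3) = t * t ^ ((2 : ℝ) / 3) := by
        nth_rewrite 2 [← Real.rpow_one t]
        rw [← Real.rpow_add htpos]
        norm_num
      linarith [heq ▸ h3]
    have h5 : a ^ ((5 : ℝ) / 3) ≤ Bv ^ ((5 : ℝ) / 3) * b := by
      rw [hat, Real.mul_rpow htpos.le hBpos.le]
      calc t ^ ((5:ℝ)/3) * Bv ^ ((5:ℝ)/3) ≤ b * Bv ^ ((5:ℝ)/3) :=
            mul_le_mul_of_nonneg_right h4 (Real.rpow_nonneg hBpos.le _)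
        _ = Bv ^ ((5:ℝ)/3) * b := mul_comm _ _
    have h6 : a ^ ((1 : ℝ) / 3) ≤ A ^ ((1 : ℝ) / 3) :=
      Real.rpow_le_rpow ha haA (by norm_num)
    calc a ^ 2 = a ^ ((2 : ℝ)) := by
          rw [← Real.rpow_natCast a 2]; norm_num
      _ = a ^ ((1 : ℝ) / 3 + (5 : ℝ) / 3) := by norm_num
      _ = a ^ ((1 : ℝ) / 3) * a ^ ((5 : ℝ) / 3) := Real.rpow_add hapos _ _
      _ ≤ A ^ ((1 : ℝ) / 3) * (Bv ^ ((5 : ℝ) / 3) * b) :=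
          mul_le_mul h6 h5 (Real.rpow_nonneg ha _) (Real.rpow_nonneg hA _)
      _ = A ^ ((1 : ℝ) / 3) * Bv ^ ((5 : ℝ) / 3) * b := by ring

lemma euclid_key (K R : ℝ) (hK : 0 ≤ K) (hR : 0 < R) (g : R3 → ℝ)
    (hg : Measurable g) (hg0 : ∀ v, 0 ≤ g v)
    (hgK : ∀ᵐ v : R3, g v ≤ K)
    (hgs : ∀ v : R3, v ∉ Metric.closedBall (0 : R3) R → g v = 0) :
    Integrable g ∧ Integrable (fun v => ‖v‖ ^ 2 * g v) ∧
      (0 ≤ ∫ v, ‖v‖ ^ 2 * g v) ∧ (∫ v, g v) ≤ 4 / 3 * π * K * R ^ 3 ∧ (0 ≤ ∫ v, g v) ∧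
      (∫ v, g v) ^ 2 ≤ (4 / 3 * π * K * R ^ 3) ^ ((1 : ℝ) / 3) *
        (4 / 3 * π * K + 1) ^ ((5 : ℝ) / 3) * ∫ v, ‖v‖ ^ 2 * g v := by
  set B := Metric.closedBall (0 : R3) R with hBdef
  have hBm : MeasurableSet B := measurableSet_closedBall
  have hBfin : volume B < ⊤ := measure_closedBall_lt_top
  -- dominators
  have hDint : Integrable (B.indicator fun _ => K) volume :=
    (integrable_indicator_iff hBm).2 (integrableOn_const hBfin.ne)
  have hD2int : Integrable (B.indicator fun _ => K * R ^ 2) volume :=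
    (integrable_indicator_iff hBm).2 (integrableOn_const hBfin.ne)
  have hgle : ∀ᵐ v : R3, ‖g v‖ ≤ B.indicator (fun _ => K) v := by
    filter_upwards [hgK] with v hv
    rw [Real.norm_of_nonneg (hg0 v)]
    by_cases hvB : v ∈ B
    · rw [Set.indicator_of_mem hvB]; exact hv
    · rw [hgs v hvB, Set.indicator_of_notMem hvB]
  have hgint : Integrable g volume := hDint.mono' hg.aestronglyMeasurable hgle
  have hm2le : ∀ᵐ v : R3, ‖‖v‖ ^ 2 * g v‖ ≤ B.indicator (fun _ => K * R ^ 2) v := by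
    filter_upwards [hgK] with v hv
    rw [Real.norm_of_nonneg (mul_nonneg (by positivity) (hg0 v))]
    by_cases hvB : v ∈ B
    · rw [Set.indicator_of_mem hvB]
      have hvR : ‖v‖ ≤ R := by
        rwa [hBdef, Metric.mem_closedBall, dist_zero_right] at hvB
      have h1 : ‖v‖ ^ 2 ≤ R ^ 2 := pow_le_pow_left₀ (norm_nonneg v) hvR 2
      calc ‖v‖ ^ 2 * g v ≤ R ^ 2 * K :=
            mul_le_mul h1 hv (hg0 v) (by positivity)
        _ = K * R ^ 2 := mul_comm _ _
    · rw [hgs v hvB, Set.indicator_of_notMem hvB]; simp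
  have hm2int : Integrable (fun v => ‖v‖ ^ 2 * g v) volume :=
    hD2int.mono' ((measurable_norm.pow_const 2).mul hg).aestronglyMeasurable hm2le
  have hm2nonneg : 0 ≤ ∫ v, ‖v‖ ^ 2 * g v :=
    integral_nonneg fun v => mul_nonneg (by positivity) (hg0 v)
  have hm0nonneg : 0 ≤ ∫ v, g v := integral_nonneg hg0
  have hm0A : (∫ v, g v) ≤ 4 / 3 * π * K * R ^ 3 := by
    have h1 : (∫ v, g v) ≤ ∫ v, B.indicator (fun _ => K) v := by
      apply integral_mono_ae hgint hDint
      filter_upwards [hgle] with v hv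
      exact (le_abs_self _).trans hv
    rw [integral_indicator_const _ hBm, smul_eq_mul, measureReal_def, vol_cb R hR.le] at h1
    calc (∫ v, g v) ≤ 4 / 3 * π * R ^ 3 * K := h1
      _ = 4 / 3 * π * K * R ^ 3 := by ring
  have hsplit : ∀ r : ℝ, 0 < r →
      (∫ v, g v) ≤ (4 / 3 * π * K) * r ^ 3 + (∫ v, ‖v‖ ^ 2 * g v) / r ^ 2 := by
    intro r hr
    set s := Metric.closedBall (0 : R3) r with hsdef
    have hsm : MeasurableSet s := measurableSet_closedBall
    have h1 : (∫ v in s, g v) ≤ K * (volume s).toReal := by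
      have hb : ∀ᵐ v ∂(volume.restrict s), ‖g v‖ ≤ K := by
        filter_upwards [ae_restrict_of_ae hgK] with v hv
        rw [Real.norm_of_nonneg (hg0 v)]; exact hv
      have := norm_setIntegral_le_of_norm_le_const_ae
        (μ := volume) (s := s) measure_closedBall_lt_top hb
      exact (le_abs_self _).trans this
    have h2 : (∫ v in sᶜ, g v) ≤ (∫ v, ‖v‖ ^ 2 * g v) / r ^ 2 := by
      have hle : ∀ v ∈ sᶜ, g v ≤ ‖v‖ ^ 2 * g v / r ^ 2 := by
        intro v hv
        have hrv : r ≤ ‖v‖ := by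
          simp only [hsdef, Set.mem_compl_iff, Metric.mem_closedBall, dist_zero_right,
            not_le] at hv
          exact hv.le
        have hsq : r ^ 2 ≤ ‖v‖ ^ 2 := pow_le_pow_left₀ hr.le hrv 2
        rw [le_div_iff₀ (by positivity)]
        calc g v * r ^ 2 = r ^ 2 * g v := mul_comm _ _
          _ ≤ ‖v‖ ^ 2 * g v := mul_le_mul_of_nonneg_right hsq (hg0 v)
      calc (∫ v in sᶜ, g v) ≤ ∫ v in sᶜ, ‖v‖ ^ 2 * g v / r ^ 2 :=
            setIntegral_mono_on hgint.integrableOn (hm2int.div_const _).integrableOn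
              hsm.compl hle
        _ ≤ ∫ v, ‖v‖ ^ 2 * g v / r ^ 2 :=
            setIntegral_le_integral (hm2int.div_const _)
              (ae_of_all _ fun v => div_nonneg (mul_nonneg (by positivity) (hg0 v))
                (by positivity))
        _ = (∫ v, ‖v‖ ^ 2 * g v) / r ^ 2 := integral_div _ _
    have hvols : (volume s).toReal = 4 / 3 * π * r ^ 3 := vol_cb r hr.le
    calc (∫ v, g v) = (∫ v in s, g v) + ∫ v in sᶜ, g v :=
          (integral_add_compl hsm hgint).symm
      _ ≤ K * (volume s).toReal + (∫ v, ‖v‖ ^ 2 * g v) / r ^ 2 := add_le_add h1 h2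
      _ = (4 / 3 * π * K) * r ^ 3 + (∫ v, ‖v‖ ^ 2 * g v) / r ^ 2 := by
          rw [hvols]; ring
  refine ⟨hgint, hm2int, hm2nonneg, hm0A, hm0nonneg, ?_⟩
  exact real_key (4 / 3 * π * K) (4 / 3 * π * K * R ^ 3) (4 / 3 * π * K + 1)
    (∫ v, g v) (∫ v, ‖v‖ ^ 2 * g v) (by positivity) rfl (by positivity)
    hm0nonneg hm2nonneg hm0A hsplit

/-- If `0 ≤ f ≤ K` a.e. and `f(x,·)` is supported in the ball `B(0,R)` for a.e. x,
then `∫ (m₀f)² dx ≤ ((4/3)πKR³)^{1/3} ((4/3)πK + 1)^{5/3} M₂f`. -/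
theorem m0_sq_integral_bound (K R : ℝ) (hK : 0 ≤ K) (hR : 0 < R) (f : T3 × R3 → ℝ)
    (hf_meas : Measurable f)
    (hf_nonneg : ∀ p, 0 ≤ f p)
    (hf_bdd : ∀ᵐ p ∂(volume : Measure (T3 × R3)), f p ≤ K)
    (hsupp : ∀ᵐ x ∂(volume : Measure T3),
      ∀ v : R3, v ∉ Metric.closedBall (0 : R3) R → f (x, v) = 0) :
    (∫ x : T3, (∫ v : R3, f (x, v)) ^ 2)
      ≤ ((4 / 3) * π * K * R ^ 3) ^ ((1 : ℝ) / 3) *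
          ((4 / 3) * π * K + 1) ^ ((5 : ℝ) / 3) *
          ∫ p : T3 × R3, ‖p.2‖ ^ 2 * f p := by
  set A : ℝ := 4 / 3 * π * K * R ^ 3 with hAdef
  set C : ℝ := (4 / 3 * π * K * R ^ 3) ^ ((1 : ℝ) / 3) *
    (4 / 3 * π * K + 1) ^ ((5 : ℝ) / 3) with hCdef
  have hCnonneg : 0 ≤ C := by
    apply mul_nonneg (Real.rpow_nonneg (by positivity) _) (Real.rpow_nonneg (by positivity) _)
  rw [Measure.volume_eq_prod] at hf_bdd
  have hf_bdd' : ∀ᵐ x ∂(volume : Measure T3), ∀ᵐ v ∂(volume : Measure R3), f (x, v) ≤ K :=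
    Measure.ae_ae_of_ae_prod hf_bdd
  -- key a.e. statement
  have hkey : ∀ᵐ x ∂(volume : Measure T3),
      Integrable (fun v => f (x, v)) volume ∧
      Integrable (fun v : R3 => ‖v‖ ^ 2 * f (x, v)) volume ∧
      (0 ≤ ∫ v : R3, ‖v‖ ^ 2 * f (x, v)) ∧ (∫ v, f (x, v)) ≤ A ∧ (0 ≤ ∫ v, f (x, v)) ∧
      (∫ v, f (x, v)) ^ 2 ≤ C * ∫ v : R3, ‖v‖ ^ 2 * f (x, v) := by
    filter_upwards [hf_bdd', hsupp] with x hx1 hx2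
    exact euclid_key K R hK hR (fun v => f (x, v))
      (hf_meas.comp measurable_prodMk_left) (fun v => hf_nonneg _) hx1 hx2
  -- product integrability of F
  have hsuppP : ∀ᵐ p ∂((volume : Measure T3).prod (volume : Measure R3)),
      p.2 ∉ Metric.closedBall (0 : R3) R → f p = 0 := by
    have h := Measure.quasiMeasurePreserving_fst
      (μ := (volume : Measure T3)) (ν := (volume : Measure R3)) |>.ae hsupp
    filter_upwards [h] with p hp hv
    simpa using hp p.2 hv
  have hFmeas : Measurable fun p : T3 × R3 => ‖p.2‖ ^ 2 * f p :=
    ((measurable_snd.norm).pow_const 2).mul hf_meas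
  have hDPint : Integrable
      ((Set.univ ×ˢ Metric.closedBall (0 : R3) R).indicator fun _ => K * R ^ 2)
      ((volume : Measure T3).prod (volume : Measure R3)) := by
    refine (integrable_indicator_iff (MeasurableSet.univ.prod measurableSet_closedBall)).2
      (integrableOn_const ?_)
    rw [Measure.prod_prod]
    exact (ENNReal.mul_lt_top (measure_lt_top _ _) measure_closedBall_lt_top).ne
  have hFint : Integrable (fun p : T3 × R3 => ‖p.2‖ ^ 2 * f p)
      ((volume : Measure T3).prod (volume : Measure R3)) := by
    refine hDPint.mono' hFmeas.aestronglyMeasurable ?_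
    filter_upwards [hf_bdd, hsuppP] with p h1 h2
    by_cases hp : p.2 ∈ Metric.closedBall (0 : R3) R
    · rw [Real.norm_of_nonneg (mul_nonneg (by positivity) (hf_nonneg p)),
        Set.indicator_of_mem (by exact ⟨Set.mem_univ _, hp⟩)]
      have hvR : ‖p.2‖ ≤ R := by
        rwa [Metric.mem_closedBall, dist_zero_right] at hp
      have hnr : ‖p.2‖ ^ 2 ≤ R ^ 2 := pow_le_pow_left₀ (norm_nonneg _) hvR 2
      calc ‖p.2‖ ^ 2 * f p ≤ R ^ 2 * K :=
            mul_le_mul hnr h1 (hf_nonneg p) (by positivity)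
        _ = K * R ^ 2 := mul_comm _ _
    · rw [h2 hp, Set.indicator_of_notMem (fun hmem => hp hmem.2)]
      simp
  have hrhs : (∫ p : T3 × R3, ‖p.2‖ ^ 2 * f p)
      = ∫ x : T3, ∫ v : R3, ‖v‖ ^ 2 * f (x, v) := by
    rw [Measure.volume_eq_prod]
    exact integral_prod _ hFint
  have h_int : Integrable (fun x : T3 => ∫ v : R3, ‖v‖ ^ 2 * f (x, v)) volume :=
    hFint.integral_prod_left
  -- integrability of (m₀)²
  have hg_sm : StronglyMeasurable fun x : T3 => ∫ v : R3, f (x, v) :=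
    hf_meas.stronglyMeasurable.integral_prod_right'
  have hg2int : Integrable (fun x : T3 => (∫ v : R3, f (x, v)) ^ 2) volume := by
    refine (integrable_const (A ^ 2)).mono'
      ((hg_sm.mul hg_sm).aestronglyMeasurable.congr
        (ae_of_all _ fun x => (sq (∫ v : R3, f (x, v))).symm)) ?_
    filter_upwards [hkey] with x hx
    rw [Real.norm_of_nonneg (sq_nonneg _)]
    exact pow_le_pow_left₀ hx.2.2.2.2.1 hx.2.2.2.1 2
  calc (∫ x : T3, (∫ v : R3, f (x, v)) ^ 2)
      ≤ ∫ x : T3, C * ∫ v : R3, ‖v‖ ^ 2 * f (x, v) := by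
        refine integral_mono_ae hg2int (h_int.const_mul C) ?_
        filter_upwards [hkey] with x hx
        exact hx.2.2.2.2.2
    _ = C * ∫ x : T3, ∫ v : R3, ‖v‖ ^ 2 * f (x, v) := integral_const_mul _ _
    _ = C * ∫ p : T3 × R3, ‖p.2‖ ^ 2 * f p := by rw [hrhs]
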